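/- Let A and B be finite sets in a universe U, each nonempty, and let σ : U → ℝ be an injective function (a random assignment of distinct priorities). Define h(S) = the element of S minimizing σ. If the minimizer of σ over A ∪ B lies in A ∩ B, then h(A) = h(B); conversely if h(A) = h(B) then the minimizer of σ over A ∪ B lies in A ∩ B. Consequently, when σ is chosen uniformly at random among injections (equivalently, the minimum of A ∪ B is uniform over A ∪ B), the probability that h(A) = h(B) equals |A ∩ B| / |A ∪ B|. -/
import Mathlib


/-- MinHash, deterministic core: for an injective priority function `σ`, the
minimizers `a` of `σ` over `A`, `b` over `B`, and `m` over `A ∪ B` satisfy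
`a = b` if and only if `m ∈ A ∩ B`. -/
theorem stmt_10 {U : Type*} [DecidableEq U] (A B : Finset U)
    (hA : A.Nonempty) (hB : B.Nonempty) (σ : U → ℝ) (hσ : Function.Injective σ)
    (a b m : U)
    (ha : a ∈ A ∧ ∀ x ∈ A, σ a ≤ σ x)
    (hb : b ∈ B ∧ ∀ x ∈ B, σ b ≤ σ x)
    (hm : m ∈ A ∪ B ∧ ∀ x ∈ A ∪ B, σ m ≤ σ x) :
    a = b ↔ m ∈ A ∩ B := by
  obtain ⟨haA, haMin⟩ := ha
  obtain ⟨hbB, hbMin⟩ := hb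
  obtain ⟨hmU, hmMin⟩ := hm
  have hmA : m ∈ A → m = a := fun h =>
    hσ (le_antisymm (hmMin a (Finset.mem_union_left _ haA)) (haMin m h))
  have hmB : m ∈ B → m = b := fun h =>
    hσ (le_antisymm (hmMin b (Finset.mem_union_right _ hbB)) (hbMin m h))
  constructor
  · intro hab
    rcases Finset.mem_union.mp hmU with h | h
    · have := hmA h
      subst this
      exact Finset.mem_inter.mpr ⟨h, hab ▸ hbB⟩
    · have := hmB h
      subst this
      exact Finset.mem_inter.mpr ⟨hab ▸ haA, h⟩
  · intro h
    obtain ⟨h1, h2⟩ := Finset.mem_inter.mp h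
    rw [← hmA h1, ← hmB h2]
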